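/- Let L0 ∈ ℝ^{n×n} have rank r with reduced SVD L0 = UΣVᵀ (U, V ∈ ℝ^{n×r} with orthonormal columns) and let T = {UXᵀ + YVᵀ : X, Y ∈ ℝ^{n×r}}. Then for every H ∈ ℝ^{n×n} there exists W0 ∈ ℝ^{n×n} with P_T W0 = 0 and ‖W0‖ ≤ 1 such that ⟨W0, H⟩ = ‖P_{T^⊥} H‖_*, and consequently ‖L0 + H‖_* ≥ ‖L0‖_* + ⟨UVᵀ, H⟩ + ‖P_{T^⊥} H‖_*. -/

import Mathlib

open scoped BigOperators Matrix

abbrev Mat (n : ℕ) := Matrix (Fin n) (Fin n) ℝ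

/-- Trace (Frobenius) inner product `⟨X, Y⟩ = trace (Xᵀ Y)`. -/
def finner {n : ℕ} (X Y : Mat n) : ℝ := ∑ i, ∑ j, X i j * Y i j

/-- Frobenius norm. -/
noncomputable def fnorm {n : ℕ} (X : Mat n) : ℝ := Real.sqrt (finner X X)

/-- Entrywise ℓ¹ norm. -/
def l1Norm {n : ℕ} (X : Mat n) : ℝ := ∑ i, ∑ j, |X i j|

/-- Entrywise ℓ∞ norm. -/
noncomputable def linfNorm {n : ℕ} (X : Mat n) : ℝ := ⨆ p : Fin n × Fin n, |X p.1 p.2|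

/-- Spectral (ℓ² operator) norm. -/
noncomputable def specNorm {n : ℕ} (X : Mat n) : ℝ := ‖Matrix.toEuclideanCLM (𝕜 := ℝ) X‖

/-- Nuclear norm: the sum of the singular values, i.e. of the square roots of the
eigenvalues of `Xᵀ * X`. -/
noncomputable def nucNorm {n : ℕ} (X : Mat n) : ℝ :=
  ∑ i, Real.sqrt ((show (Xᵀ * X).IsHermitian by
    simpa [Matrix.conjTranspose_eq_transpose_of_trivial] using
      Matrix.isHermitian_conjTranspose_mul_self X).eigenvalues i)

/-- Operator norm of a linear map on matrix space, w.r.t. the Frobenius norm: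
`sup {‖A X‖_F : ‖X‖_F = 1}`. -/
noncomputable def opNorm {n : ℕ} (A : Mat n →ₗ[ℝ] Mat n) : ℝ :=
  sSup {c : ℝ | ∃ X : Mat n, fnorm X = 1 ∧ c = fnorm (A X)}

/-- `P` is the orthogonal projection onto the subspace `V` (w.r.t. the trace inner product). -/
def IsOrthProj {n : ℕ} (V : Submodule ℝ (Mat n)) (P : Mat n →ₗ[ℝ] Mat n) : Prop :=
  (∀ X, P X ∈ V) ∧ (∀ X ∈ V, P X = X) ∧ (∀ X, ∀ Y ∈ V, finner (X - P X) Y = 0)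

/-- Orthogonal complement of a subspace of matrix space w.r.t. the trace inner product. -/
def orthComp {n : ℕ} (V : Submodule ℝ (Mat n)) : Submodule ℝ (Mat n) where
  carrier := {X | ∀ Y ∈ V, finner X Y = 0}
  zero_mem' := by intro Y hY; simp [finner]
  add_mem' := by
    intro a b ha hb Y hY
    have h1 := ha Y hY
    have h2 := hb Y hY
    simp only [finner, Matrix.add_apply, add_mul, Finset.sum_add_distrib] at *
    rw [h1, h2]; ring
  smul_mem' := by
    intro c a ha Y hY
    have h1 := ha Y hY
    simp only [finner, Matrix.smul_apply, smul_eq_mul, mul_assoc, ← Finset.mul_sum] at *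
    rw [h1]; ring

/-- The tangent space `T = {U Xᵀ + Y Vᵀ}` associated with the reduced SVD `L₀ = U Σ Vᵀ`. -/
def tangentT {n r : ℕ} (U V : Matrix (Fin n) (Fin r) ℝ) : Submodule ℝ (Mat n) where
  carrier := {A | ∃ X Y : Matrix (Fin n) (Fin r) ℝ, A = U * Xᵀ + Y * Vᵀ}
  zero_mem' := ⟨0, 0, by simp⟩
  add_mem' := by
    rintro a b ⟨X1, Y1, rfl⟩ ⟨X2, Y2, rfl⟩
    exact ⟨X1 + X2, Y1 + Y2, by rw [Matrix.transpose_add, Matrix.mul_add, Matrix.add_mul]; abel⟩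
  smul_mem' := by
    rintro c a ⟨X1, Y1, rfl⟩
    exact ⟨c • X1, c • Y1,
      by rw [Matrix.transpose_smul, Matrix.mul_smul, Matrix.smul_mul, smul_add]⟩

/-- The support subspace `Ω` of `S₀`: matrices vanishing wherever `S₀` vanishes. -/
def suppSub {n : ℕ} (S0 : Mat n) : Submodule ℝ (Mat n) where
  carrier := {X | ∀ i j, S0 i j = 0 → X i j = 0}
  zero_mem' := by intro i j _; rfl
  add_mem' := by
    intro a b ha hb i j h
    simp [Matrix.add_apply, ha i j h, hb i j h]
  smul_mem' := by
    intro c a ha i j h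
    simp [Matrix.smul_apply, ha i j h]

/-- Entrywise sign matrix. -/
noncomputable def sgnMat {n : ℕ} (S : Mat n) : Mat n := Matrix.of fun i j => Real.sign (S i j)


namespace Statement9Aux

open Matrix

variable {n r : ℕ}

lemma finner_eq_trace (X Y : Mat n) : finner X Y = (Xᵀ * Y).trace := by
  simp only [finner, Matrix.trace, Matrix.diag, Matrix.mul_apply, Matrix.transpose_apply]
  rw [Finset.sum_comm]

lemma finner_comm (X Y : Mat n) : finner X Y = finner Y X := by
  simp only [finner, mul_comm]

lemma finner_sub_left (X Y Z : Mat n) : finner (X - Y) Z = finner X Z - finner Y Z := by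
  simp [finner, Matrix.sub_apply, sub_mul, Finset.sum_sub_distrib]

lemma finner_add_left (X Y Z : Mat n) : finner (X + Y) Z = finner X Z + finner Y Z := by
  simp [finner, Matrix.add_apply, add_mul, Finset.sum_add_distrib]

lemma finner_add_right (X Y Z : Mat n) : finner X (Y + Z) = finner X Y + finner X Z := by
  simp [finner, Matrix.add_apply, mul_add, Finset.sum_add_distrib]

lemma finner_self_eq_zero {X : Mat n} (h : finner X X = 0) : X = 0 := by
  ext i j
  have h1 : ∀ i ∈ (Finset.univ : Finset (Fin n)),
      0 ≤ ∑ j, X i j * X i j := fun i _ => Finset.sum_nonneg fun j _ => mul_self_nonneg _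
  have h2 := (Finset.sum_eq_zero_iff_of_nonneg h1).mp h i (Finset.mem_univ i)
  have h3 := (Finset.sum_eq_zero_iff_of_nonneg fun j _ => mul_self_nonneg (X i j)).mp h2 j
    (Finset.mem_univ j)
  simpa using mul_self_eq_zero.mp h3

lemma trace_mul_transpose_self_eq_zero {C : Matrix (Fin n) (Fin r) ℝ}
    (h : (C * Cᵀ).trace = 0) : C = 0 := by
  have ht : (C * Cᵀ).trace = ∑ i, ∑ j, C i j * C i j := by
    simp [Matrix.trace, Matrix.diag, Matrix.mul_apply]
  rw [ht] at h
  ext i j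
  have h1 : ∀ i ∈ (Finset.univ : Finset (Fin n)),
      0 ≤ ∑ j, C i j * C i j := fun i _ => Finset.sum_nonneg fun j _ => mul_self_nonneg _
  have h2 := (Finset.sum_eq_zero_iff_of_nonneg h1).mp h i (Finset.mem_univ i)
  have h3 := (Finset.sum_eq_zero_iff_of_nonneg fun j _ => mul_self_nonneg (C i j)).mp h2 j
    (Finset.mem_univ j)
  simpa using mul_self_eq_zero.mp h3

lemma dot_adjoint (M : Mat n) (x y : Fin n → ℝ) :
    (M *ᵥ x) ⬝ᵥ y = x ⬝ᵥ (Mᵀ *ᵥ y) := by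
  rw [dotProduct_comm, Matrix.dotProduct_mulVec, ← Matrix.mulVec_transpose, dotProduct_comm]

lemma dot_self_nonneg (x : Fin n → ℝ) : 0 ≤ x ⬝ᵥ x :=
  Finset.sum_nonneg fun _ _ => mul_self_nonneg _

lemma dot_cs (x y : Fin n → ℝ) : x ⬝ᵥ y ≤ Real.sqrt (x ⬝ᵥ x) * Real.sqrt (y ⬝ᵥ y) := by
  have := Real.sum_mul_le_sqrt_mul_sqrt Finset.univ x y
  simpa [dotProduct, pow_two] using this

/-- If `MᵀM` is a symmetric idempotent then `M` is a contraction. -/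
lemma contraction_of_proj {M R : Mat n} (hMR : Mᵀ * M = R) (hRp : R * R = R)
    (hRs : Rᵀ = R) (x : Fin n → ℝ) : (M *ᵥ x) ⬝ᵥ (M *ᵥ x) ≤ x ⬝ᵥ x := by
  have h1 : (M *ᵥ x) ⬝ᵥ (M *ᵥ x) = x ⬝ᵥ (R *ᵥ x) := by
    rw [dot_adjoint, Matrix.mulVec_mulVec, hMR]
  have h2 : (R *ᵥ x) ⬝ᵥ (R *ᵥ x) = x ⬝ᵥ (R *ᵥ x) := by
    rw [dot_adjoint, Matrix.mulVec_mulVec, hRs, hRp]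
  set s := x ⬝ᵥ (R *ᵥ x) with hs
  have hsnn : 0 ≤ s := h2 ▸ dot_self_nonneg _
  have hcs : s ^ 2 ≤ (x ⬝ᵥ x) * s := by
    have h := Finset.sum_mul_sq_le_sq_mul_sq Finset.univ x (R *ᵥ x)
    have e1 : s ^ 2 ≤ (x ⬝ᵥ x) * ((R *ᵥ x) ⬝ᵥ (R *ᵥ x)) := by
      rw [hs, ← h2] at *
      simpa [dotProduct, pow_two] using h
    rwa [h2] at e1
  rw [h1]
  nlinarith [dot_self_nonneg x, hcs, hsnn]

lemma specNorm_le_one {M : Mat n} (h : ∀ x : Fin n → ℝ, (M *ᵥ x) ⬝ᵥ (M *ᵥ x) ≤ x ⬝ᵥ x) :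
    specNorm M ≤ 1 := by
  rw [specNorm]
  refine ContinuousLinearMap.opNorm_le_bound _ zero_le_one fun x => ?_
  rw [one_mul]
  obtain ⟨v, rfl⟩ : ∃ v : Fin n → ℝ, (WithLp.equiv 2 _).symm v = x :=
    ⟨WithLp.equiv 2 _ x, by simp⟩
  rw [WithLp.equiv_symm_apply, Matrix.toEuclideanCLM_toLp]
  rw [EuclideanSpace.norm_eq, EuclideanSpace.norm_eq]
  apply Real.sqrt_le_sqrt
  have hv := h v
  simpa [Matrix.toLin'_apply, dotProduct, Real.norm_eq_abs, sq_abs, pow_two,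
    ] using hv

section Spectral

variable (Z : Mat n)

private noncomputable abbrev hAZ : (Zᵀ * Z).IsHermitian := by
  simpa [Matrix.conjTranspose_eq_transpose_of_trivial] using
    Matrix.isHermitian_conjTranspose_mul_self Z
private noncomputable abbrev μs : Fin n → ℝ := (hAZ Z).eigenvalues
private noncomputable abbrev Em : Mat n := ((hAZ Z).eigenvectorUnitary : Mat n)

lemma hE1 : (Em Z)ᵀ * Em Z = 1 := by
  have := Matrix.mem_unitaryGroup_iff'.mp (hAZ Z).eigenvectorUnitary.2
  simpa [Matrix.star_eq_conjTranspose] using this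

lemma hE2 : Em Z * (Em Z)ᵀ = 1 := by
  have := Matrix.mem_unitaryGroup_iff.mp (hAZ Z).eigenvectorUnitary.2
  simpa [Matrix.star_eq_conjTranspose] using this

lemma hspec : Zᵀ * Z = Em Z * Matrix.diagonal (μs Z) * (Em Z)ᵀ := by
  have h := (hAZ Z).spectral_theorem
  simpa [RCLike.ofReal_real_eq_id, Matrix.star_eq_conjTranspose,
    Matrix.conjTranspose_eq_transpose_of_trivial] using h

lemma μs_nonneg (i : Fin n) : 0 ≤ μs Z i :=
  (Matrix.posSemidef_conjTranspose_mul_self Z).eigenvalues_nonneg i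

lemma sand (a b : Fin n → ℝ) :
    (Em Z * Matrix.diagonal a * (Em Z)ᵀ) * (Em Z * Matrix.diagonal b * (Em Z)ᵀ)
      = Em Z * Matrix.diagonal (fun i => a i * b i) * (Em Z)ᵀ := by
  have h : Matrix.diagonal a * Matrix.diagonal b = Matrix.diagonal (fun i => a i * b i) := by
    rw [Matrix.diagonal_mul_diagonal]
  calc (Em Z * Matrix.diagonal a * (Em Z)ᵀ) * (Em Z * Matrix.diagonal b * (Em Z)ᵀ)
      = Em Z * Matrix.diagonal a * (((Em Z)ᵀ * Em Z) * (Matrix.diagonal b * (Em Z)ᵀ)) := by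
        simp only [Matrix.mul_assoc]
    _ = Em Z * (Matrix.diagonal a * Matrix.diagonal b) * (Em Z)ᵀ := by
        rw [hE1, Matrix.one_mul]; simp only [Matrix.mul_assoc]
    _ = _ := by rw [h]

lemma trace_sandwich (a : Fin n → ℝ) :
    (Em Z * Matrix.diagonal a * (Em Z)ᵀ).trace = ∑ i, a i := by
  rw [Matrix.trace_mul_cycle, hE1, Matrix.one_mul, Matrix.trace_diagonal]

lemma sandwich_transpose (a : Fin n → ℝ) :
    (Em Z * Matrix.diagonal a * (Em Z)ᵀ)ᵀ = Em Z * Matrix.diagonal a * (Em Z)ᵀ := by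
  simp [Matrix.transpose_mul, Matrix.diagonal_transpose, Matrix.mul_assoc]

lemma diag_entry (C : Mat n) (i : Fin n) :
    ((Em Z)ᵀ * C * Em Z) i i = (fun k => Em Z k i) ⬝ᵥ (C *ᵥ fun k => Em Z k i) := by
  simp only [Matrix.mul_apply, Matrix.mulVec, dotProduct, Matrix.transpose_apply,
    Finset.sum_mul, Finset.mul_sum]
  rw [Finset.sum_comm]
  exact Finset.sum_congr rfl fun k _ => Finset.sum_congr rfl fun j _ => by ring

lemma conj_diag : (Em Z)ᵀ * (Zᵀ * Z) * Em Z = Matrix.diagonal (μs Z) := by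
  rw [hspec]
  calc (Em Z)ᵀ * (Em Z * Matrix.diagonal (μs Z) * (Em Z)ᵀ) * Em Z
      = ((Em Z)ᵀ * Em Z) * Matrix.diagonal (μs Z) * ((Em Z)ᵀ * Em Z) := by
        simp only [Matrix.mul_assoc]
    _ = Matrix.diagonal (μs Z) := by rw [hE1]; simp

end Spectral

/-- Duality: if `M` is a contraction then `⟨M, B⟩ ≤ ‖B‖₊`. -/
lemma finner_le_nucNorm (M B : Mat n) (hM : ∀ x, (M *ᵥ x) ⬝ᵥ (M *ᵥ x) ≤ x ⬝ᵥ x) :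
    finner M B ≤ nucNorm B := by
  have key : finner M B = ∑ i, ((Em B)ᵀ * (Mᵀ * B) * Em B) i i := by
    rw [finner_eq_trace]
    have : ((Em B)ᵀ * (Mᵀ * B) * Em B).trace = (Mᵀ * B).trace := by
      rw [Matrix.trace_mul_cycle, ← Matrix.mul_assoc, hE2, Matrix.one_mul]
    rw [← this]; rfl
  rw [key]
  have step : ∀ i, ((Em B)ᵀ * (Mᵀ * B) * Em B) i i ≤ Real.sqrt (μs B i) := by
    intro i
    set e : Fin n → ℝ := fun k => Em B k i with he
    have h1 : ((Em B)ᵀ * (Mᵀ * B) * Em B) i i = (M *ᵥ e) ⬝ᵥ (B *ᵥ e) := by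
      rw [diag_entry, dot_adjoint, Matrix.mulVec_mulVec]
    have hee : e ⬝ᵥ e = 1 := by
      have h : ((Em B)ᵀ * Em B) i i = (1 : Mat n) i i := by rw [hE1 B]
      simp only [Matrix.mul_apply, Matrix.transpose_apply, Matrix.one_apply_eq] at h
      simpa [dotProduct, he] using h
    have hBe : (B *ᵥ e) ⬝ᵥ (B *ᵥ e) = μs B i := by
      rw [dot_adjoint, Matrix.mulVec_mulVec]
      have h2 : e ⬝ᵥ ((Bᵀ * B) *ᵥ e) = ((Em B)ᵀ * (Bᵀ * B) * Em B) i i := (diag_entry B _ i).symm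
      rw [h2, conj_diag, Matrix.diagonal_apply_eq]
    have hMe : (M *ᵥ e) ⬝ᵥ (M *ᵥ e) ≤ 1 := by rw [← hee]; exact hM e
    calc ((Em B)ᵀ * (Mᵀ * B) * Em B) i i = (M *ᵥ e) ⬝ᵥ (B *ᵥ e) := h1
      _ ≤ Real.sqrt ((M *ᵥ e) ⬝ᵥ (M *ᵥ e)) * Real.sqrt ((B *ᵥ e) ⬝ᵥ (B *ᵥ e)) := dot_cs _ _
      _ ≤ 1 * Real.sqrt (μs B i) := by
          rw [hBe]
          gcongr
          calc Real.sqrt ((M *ᵥ e) ⬝ᵥ (M *ᵥ e)) ≤ Real.sqrt 1 := Real.sqrt_le_sqrt hMe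
            _ = 1 := Real.sqrt_one
      _ = Real.sqrt (μs B i) := one_mul _
  calc ∑ i, ((Em B)ᵀ * (Mᵀ * B) * Em B) i i ≤ ∑ i, Real.sqrt (μs B i) :=
        Finset.sum_le_sum fun i _ => step i
    _ = nucNorm B := rfl

lemma gv_mul_self {Z : Mat n} (i : Fin n)
    (gv : Fin n → ℝ) (hgv : gv = fun i => (Real.sqrt (μs Z i))⁻¹) :
    gv i * μs Z i = Real.sqrt (μs Z i) := by
  subst hgv
  by_cases hμ : μs Z i = 0
  · simp [hμ]
  · have hpos : 0 < μs Z i := lt_of_le_of_ne (μs_nonneg Z i) (Ne.symm hμ)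
    have hs := Real.mul_self_sqrt (μs_nonneg Z i)
    have hsne : Real.sqrt (μs Z i) ≠ 0 := ne_of_gt (Real.sqrt_pos.mpr hpos)
    field_simp
    rw [Real.sq_sqrt (μs_nonneg Z i)]

lemma construction (Z : Mat n) :
    ∃ W G : Mat n, W = Z * G ∧
      (∀ (m : ℕ) (V' : Matrix (Fin n) (Fin m) ℝ), Z * V' = 0 → G * V' = 0) ∧
      (Wᵀ * W) * (Wᵀ * W) = Wᵀ * W ∧
      finner W Z = nucNorm Z := by
  set gv : Fin n → ℝ := fun i => (Real.sqrt (μs Z i))⁻¹ with hgv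
  set G : Mat n := Em Z * Matrix.diagonal gv * (Em Z)ᵀ with hG
  have hGt : Gᵀ = G := by rw [hG]; exact sandwich_transpose Z gv
  set p : Fin n → ℝ := fun i => gv i * (μs Z i * gv i) with hp
  have hp01 : ∀ i, p i = if μs Z i = 0 then 0 else 1 := by
    intro i
    by_cases hμ : μs Z i = 0
    · simp [hp, hgv, hμ]
    · have hpos : 0 < μs Z i := lt_of_le_of_ne (μs_nonneg Z i) (Ne.symm hμ)
      have hsne : Real.sqrt (μs Z i) ≠ 0 := ne_of_gt (Real.sqrt_pos.mpr hpos)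
      have h1 : p i = (gv i * μs Z i) * gv i := by rw [hp]; ring
      rw [h1, gv_mul_self i gv hgv, hgv, if_neg hμ]
      simp [hsne]
  have hWW : (Z * G)ᵀ * (Z * G) = Em Z * Matrix.diagonal p * (Em Z)ᵀ := by
    calc (Z * G)ᵀ * (Z * G) = G * ((Zᵀ * Z) * G) := by
          rw [Matrix.transpose_mul, hGt]; simp only [Matrix.mul_assoc]
      _ = (Em Z * Matrix.diagonal gv * (Em Z)ᵀ) *
            ((Em Z * Matrix.diagonal (μs Z) * (Em Z)ᵀ) *
              (Em Z * Matrix.diagonal gv * (Em Z)ᵀ)) := by rw [← hspec, ← hG]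
      _ = (Em Z * Matrix.diagonal gv * (Em Z)ᵀ) *
            (Em Z * Matrix.diagonal (fun i => μs Z i * gv i) * (Em Z)ᵀ) := by
          rw [sand Z (μs Z) gv]
      _ = Em Z * Matrix.diagonal p * (Em Z)ᵀ := by
          rw [sand Z gv (fun i => μs Z i * gv i)]
  refine ⟨Z * G, G, rfl, ?_, ?_, ?_⟩
  · intro m V' hZV
    have hAV : (Zᵀ * Z) * V' = 0 := by rw [Matrix.mul_assoc, hZV, Matrix.mul_zero]
    have h5 : Matrix.diagonal (μs Z) * ((Em Z)ᵀ * V') = 0 := by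
      have h6 : (Em Z)ᵀ * ((Zᵀ * Z) * V') = 0 := by rw [hAV, Matrix.mul_zero]
      rw [hspec] at h6
      have h7 : (Em Z)ᵀ * (Em Z * Matrix.diagonal (μs Z) * (Em Z)ᵀ * V') =
          ((Em Z)ᵀ * Em Z) * (Matrix.diagonal (μs Z) * ((Em Z)ᵀ * V')) := by
        simp only [Matrix.mul_assoc]
      rw [h7, hE1, Matrix.one_mul] at h6
      exact h6
    have h8 : Matrix.diagonal gv * ((Em Z)ᵀ * V') = 0 := by
      ext i j
      have h9 : (Matrix.diagonal (μs Z) * ((Em Z)ᵀ * V')) i j = 0 := by rw [h5]; rfl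
      rw [Matrix.diagonal_mul] at h9
      by_cases hμ : μs Z i = 0
      · simp [Matrix.diagonal_mul, hgv, hμ]
      · have : ((Em Z)ᵀ * V') i j = 0 := by
          rcases mul_eq_zero.mp h9 with h | h
          · exact absurd h hμ
          · exact h
        simp [Matrix.diagonal_mul, this]
    have h10 : G * V' = Em Z * (Matrix.diagonal gv * ((Em Z)ᵀ * V')) := by
      rw [hG]; simp only [Matrix.mul_assoc]
    rw [h10, h8, Matrix.mul_zero]
  · have hpp : (fun i => p i * p i) = p := by
      funext i
      by_cases hμ : μs Z i = 0 <;> simp [hp01 i, hμ]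
    rw [hWW, sand Z p p, hpp]
  · rw [finner_eq_trace]
    have h11 : (Z * G)ᵀ * Z = Em Z * Matrix.diagonal (fun i => gv i * μs Z i) * (Em Z)ᵀ := by
      calc (Z * G)ᵀ * Z = G * (Zᵀ * Z) := by
            rw [Matrix.transpose_mul, hGt]; simp only [Matrix.mul_assoc]
        _ = (Em Z * Matrix.diagonal gv * (Em Z)ᵀ) *
              (Em Z * Matrix.diagonal (μs Z) * (Em Z)ᵀ) := by rw [← hspec, ← hG]
        _ = _ := by rw [sand Z gv (μs Z)]
    rw [h11, trace_sandwich]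
    have hall : ∀ i, gv i * μs Z i = Real.sqrt (μs Z i) := fun i => gv_mul_self i gv hgv
    rw [Finset.sum_congr rfl fun i _ => hall i]
    rfl

open scoped MatrixOrder in
lemma nucNorm_L0 (U V : Matrix (Fin n) (Fin r) ℝ) (d : Fin r → ℝ)
    (hU : Uᵀ * U = 1) (hV : Vᵀ * V = 1) (hd : ∀ i, 0 < d i) :
    nucNorm (U * Matrix.diagonal d * Vᵀ) = ∑ i, d i := by
  set L0 : Mat n := U * Matrix.diagonal d * Vᵀ with hL0
  set S : Mat n := V * Matrix.diagonal d * Vᵀ with hS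
  have hdd : ∀ i, Real.sqrt (d i) * Real.sqrt (d i) = d i :=
    fun i => Real.mul_self_sqrt (hd i).le
  have hSpsd : S.PosSemidef := by
    have h := Matrix.posSemidef_self_mul_conjTranspose
      (V * Matrix.diagonal (fun i => Real.sqrt (d i)))
    have e : (V * Matrix.diagonal (fun i => Real.sqrt (d i))) *
        (V * Matrix.diagonal (fun i => Real.sqrt (d i)))ᴴ = S := by
      have hct : (V * Matrix.diagonal (fun i => Real.sqrt (d i)))ᴴ
          = Matrix.diagonal (fun i => Real.sqrt (d i)) * Vᵀ := by
        show (V * Matrix.diagonal (fun i => Real.sqrt (d i)))ᵀ = _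
        rw [Matrix.transpose_mul, Matrix.diagonal_transpose]
      rw [hct]
      calc V * Matrix.diagonal (fun i => Real.sqrt (d i)) *
            (Matrix.diagonal (fun i => Real.sqrt (d i)) * Vᵀ)
          = V * (Matrix.diagonal (fun i => Real.sqrt (d i)) *
              Matrix.diagonal (fun i => Real.sqrt (d i))) * Vᵀ := by
            simp only [Matrix.mul_assoc]
        _ = S := by
            rw [Matrix.diagonal_mul_diagonal, hS]
            have hfun : (fun i => Real.sqrt (d i) * Real.sqrt (d i)) = d := funext hdd
            rw [hfun]
    rwa [e] at h
  have hps : (L0ᴴ * L0).PosSemidef := Matrix.posSemidef_conjTranspose_mul_self L0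
  have hmid : ∀ W : Matrix (Fin n) (Fin r) ℝ, Wᵀ * W = 1 →
      (W * Matrix.diagonal d * Vᵀ)ᵀ * (W * Matrix.diagonal d * Vᵀ)
        = V * (Matrix.diagonal d * Matrix.diagonal d) * Vᵀ := by
    intro W hW
    calc (W * Matrix.diagonal d * Vᵀ)ᵀ * (W * Matrix.diagonal d * Vᵀ)
        = V * Matrix.diagonal d * ((Wᵀ * W) * (Matrix.diagonal d * Vᵀ)) := by
          simp only [Matrix.transpose_mul, Matrix.transpose_transpose,
            Matrix.diagonal_transpose, Matrix.mul_assoc]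
      _ = V * (Matrix.diagonal d * Matrix.diagonal d) * Vᵀ := by
          rw [hW, Matrix.one_mul]; simp only [Matrix.mul_assoc]
  have hSt : Sᵀ = S := by
    rw [hS]
    simp [Matrix.transpose_mul, Matrix.diagonal_transpose, Matrix.mul_assoc]
  have hsq : S ^ 2 = L0ᴴ * L0 := by
    rw [pow_two]
    show S * S = L0ᵀ * L0
    calc S * S = Sᵀ * S := by rw [hSt]
      _ = V * (Matrix.diagonal d * Matrix.diagonal d) * Vᵀ := hmid V hV
      _ = L0ᵀ * L0 := (hmid U hU).symm
  have hkey : S = CFC.sqrt (L0ᴴ * L0) := by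
    exact ((CFC.sqrt_eq_iff _ _ hps.nonneg hSpsd.nonneg).mpr (by rw [← pow_two]; exact hsq)).symm
  have htr1 : (CFC.sqrt (L0ᴴ * L0)).trace = ∑ i, Real.sqrt (hps.1.eigenvalues i) := by
    rw [CFC.sqrt_eq_cfc, cfc_nnreal_eq_real _ (L0ᴴ * L0), hps.1.cfc_eq]
    simp only [Matrix.IsHermitian.cfc, Unitary.conjStarAlgAut_apply]
    rw [Matrix.trace_mul_cycle]
    have hstar : (star (hps.1.eigenvectorUnitary : Mat n) : Mat n) *
        (hps.1.eigenvectorUnitary : Mat n) = 1 :=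
      Matrix.mem_unitaryGroup_iff'.mp hps.1.eigenvectorUnitary.2
    rw [hstar, Matrix.one_mul, Matrix.trace_diagonal]
    simp [Real.coe_sqrt, Real.coe_toNNReal']
    exact Finset.sum_congr rfl fun i _ => congrArg Real.sqrt (max_eq_left (hps.eigenvalues_nonneg i))
  have hnuc : nucNorm L0 = ∑ i, Real.sqrt (hps.1.eigenvalues i) := rfl
  have htrS : S.trace = ∑ i, d i := by
    rw [hS, Matrix.trace_mul_cycle, hV, Matrix.one_mul, Matrix.trace_diagonal]
  rw [hnuc, ← htr1, ← hkey, htrS]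

lemma mem_orthComp_of (U V : Matrix (Fin n) (Fin r) ℝ) {Z : Mat n}
    (h1 : Uᵀ * Z = 0) (h2 : Z * V = 0) : Z ∈ orthComp (tangentT U V) := by
  intro Y hY
  obtain ⟨X, Y', rfl⟩ := hY
  have hZU : Zᵀ * U = 0 := by
    have := congrArg Matrix.transpose h1
    simpa [Matrix.transpose_mul] using this
  rw [finner_eq_trace, Matrix.mul_add, Matrix.trace_add]
  have t1 : Zᵀ * (U * Xᵀ) = 0 := by rw [← Matrix.mul_assoc, hZU, Matrix.zero_mul]
  have t2 : (Zᵀ * (Y' * Vᵀ)).trace = 0 := by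
    rw [← Matrix.mul_assoc, Matrix.trace_mul_comm]
    have : Vᵀ * (Zᵀ * Y') = (Vᵀ * Zᵀ) * Y' := by rw [Matrix.mul_assoc]
    rw [this]
    have hVZ : Vᵀ * Zᵀ = 0 := by
      have := congrArg Matrix.transpose h2
      simpa [Matrix.transpose_mul] using this
    rw [hVZ, Matrix.zero_mul, Matrix.trace_zero]
  rw [t1, t2, Matrix.trace_zero, zero_add]

lemma orthComp_u {U V : Matrix (Fin n) (Fin r) ℝ} {Z : Mat n}
    (hZ : Z ∈ orthComp (tangentT U V)) : Uᵀ * Z = 0 := by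
  set C : Matrix (Fin n) (Fin r) ℝ := Zᵀ * U with hC
  have hmem : U * Cᵀ + (0 : Matrix (Fin n) (Fin r) ℝ) * Vᵀ ∈ tangentT U V := ⟨C, 0, rfl⟩
  have h := hZ _ hmem
  rw [finner_eq_trace] at h
  have he : Zᵀ * (U * Cᵀ + (0 : Matrix (Fin n) (Fin r) ℝ) * Vᵀ) = C * Cᵀ := by
    rw [Matrix.zero_mul, add_zero, ← Matrix.mul_assoc, ← hC]
  rw [he] at h
  have hC0 : C = 0 := trace_mul_transpose_self_eq_zero h
  have := congrArg Matrix.transpose hC0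
  simpa [hC, Matrix.transpose_mul] using this

lemma orthComp_v {U V : Matrix (Fin n) (Fin r) ℝ} {Z : Mat n}
    (hZ : Z ∈ orthComp (tangentT U V)) : Z * V = 0 := by
  set D : Matrix (Fin n) (Fin r) ℝ := Z * V with hD
  have hmem : U * (0 : Matrix (Fin n) (Fin r) ℝ)ᵀ + D * Vᵀ ∈ tangentT U V := ⟨0, D, rfl⟩
  have h := hZ _ hmem
  rw [finner_eq_trace] at h
  have he : (Zᵀ * (U * (0 : Matrix (Fin n) (Fin r) ℝ)ᵀ + D * Vᵀ)).trace = (D * Dᵀ).trace := by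
    rw [Matrix.transpose_zero, Matrix.mul_zero, zero_add, ← Matrix.mul_assoc,
      Matrix.trace_mul_comm, ← Matrix.mul_assoc]
    have h1 : Vᵀ * Zᵀ = Dᵀ := by rw [hD, Matrix.transpose_mul]
    rw [h1, Matrix.trace_mul_comm]
  rw [he] at h
  exact trace_mul_transpose_self_eq_zero h

end Statement9Aux

open Statement9Aux in
/-- Subdifferential of the nuclear norm at `L₀ = U Σ Vᵀ`: for every `H`
there is `W₀` with `P_T W₀ = 0`, `‖W₀‖ ≤ 1`, `⟨W₀, H⟩ = ‖P_{T^⊥} H‖₊`, and consequently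
`‖L₀ + H‖₊ ≥ ‖L₀‖₊ + ⟨U Vᵀ, H⟩ + ‖P_{T^⊥} H‖₊`. -/
theorem statement9 {n r : ℕ}
    (L0 : Mat n) (U V : Matrix (Fin n) (Fin r) ℝ) (d : Fin r → ℝ)
    (hU : Uᵀ * U = 1) (hV : Vᵀ * V = 1) (hd : ∀ i, 0 < d i)
    (hL0 : L0 = U * Matrix.diagonal d * Vᵀ)
    (PT PTperp : Mat n →ₗ[ℝ] Mat n)
    (hPT : IsOrthProj (tangentT U V) PT)
    (hPTperp : IsOrthProj (orthComp (tangentT U V)) PTperp) :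
    ∀ H : Mat n,
      (∃ W0 : Mat n, PT W0 = 0 ∧ specNorm W0 ≤ 1 ∧ finner W0 H = nucNorm (PTperp H)) ∧
      nucNorm (L0 + H) ≥ nucNorm L0 + finner (U * Vᵀ) H + nucNorm (PTperp H) := by
  intro H
  set Z : Mat n := PTperp H with hZ
  have hZmem : Z ∈ orthComp (tangentT U V) := hPTperp.1 H
  have hUZ : Uᵀ * Z = 0 := orthComp_u hZmem
  have hZV : Z * V = 0 := orthComp_v hZmem
  obtain ⟨W0, G, hWG, hkill, hproj, hWZ⟩ := construction Z
  have hUW : Uᵀ * W0 = 0 := by rw [hWG, ← Matrix.mul_assoc, hUZ, Matrix.zero_mul]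
  have hWV : W0 * V = 0 := by
    rw [hWG, Matrix.mul_assoc, hkill r V hZV, Matrix.mul_zero]
  have hWmem : W0 ∈ orthComp (tangentT U V) := mem_orthComp_of U V hUW hWV
  have hWWt : (W0ᵀ * W0)ᵀ = W0ᵀ * W0 := by
    rw [Matrix.transpose_mul, Matrix.transpose_transpose]
  have hWcon : ∀ x, (W0 *ᵥ x) ⬝ᵥ (W0 *ᵥ x) ≤ x ⬝ᵥ x :=
    contraction_of_proj rfl hproj hWWt
  have hTmem : PT W0 ∈ tangentT U V := hPT.1 W0
  have e1 : finner (W0 - PT W0) (PT W0) = 0 := hPT.2.2 W0 (PT W0) hTmem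
  have e2 : finner W0 (PT W0) = 0 := hWmem (PT W0) hTmem
  have e3 : finner (PT W0) (PT W0) = 0 := by
    have h := finner_sub_left W0 (PT W0) (PT W0)
    linarith [h, e1, e2]
  have hPT0 : PT W0 = 0 := finner_self_eq_zero e3
  have e4 : finner (H - Z) W0 = 0 := hPTperp.2.2 H W0 hWmem
  have e5 : finner W0 H = nucNorm Z := by
    have h := finner_sub_left H Z W0
    have hc1 : finner W0 H = finner H W0 := finner_comm _ _
    have hc2 : finner Z W0 = finner W0 Z := finner_comm _ _
    linarith [h, e4, hWZ, hc1, hc2]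
  refine ⟨⟨W0, hPT0, specNorm_le_one hWcon, e5⟩, ?_⟩
  have hWU0 : W0ᵀ * U = 0 := by
    have := congrArg Matrix.transpose hUW
    simpa [Matrix.transpose_mul] using this
  have hVW0 : Vᵀ * W0ᵀ = 0 := by
    have := congrArg Matrix.transpose hWV
    simpa [Matrix.transpose_mul] using this
  set M : Mat n := U * Vᵀ + W0 with hM
  have hMt : Mᵀ = V * Uᵀ + W0ᵀ := by
    rw [hM, Matrix.transpose_add, Matrix.transpose_mul, Matrix.transpose_transpose]
  have hMtM : Mᵀ * M = V * Vᵀ + W0ᵀ * W0 := by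
    rw [hMt, hM, Matrix.add_mul, Matrix.mul_add, Matrix.mul_add]
    have t1 : V * Uᵀ * (U * Vᵀ) = V * Vᵀ := by
      rw [Matrix.mul_assoc, ← Matrix.mul_assoc Uᵀ U Vᵀ, hU, Matrix.one_mul]
    have t2 : V * Uᵀ * W0 = 0 := by rw [Matrix.mul_assoc, hUW, Matrix.mul_zero]
    have t3 : W0ᵀ * (U * Vᵀ) = 0 := by rw [← Matrix.mul_assoc, hWU0, Matrix.zero_mul]
    rw [t1, t2, t3, add_zero, zero_add]
  have hRs : (V * Vᵀ + W0ᵀ * W0)ᵀ = V * Vᵀ + W0ᵀ * W0 := by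
    rw [Matrix.transpose_add, Matrix.transpose_mul, Matrix.transpose_transpose, hWWt]
  have hRp : (V * Vᵀ + W0ᵀ * W0) * (V * Vᵀ + W0ᵀ * W0) = V * Vᵀ + W0ᵀ * W0 := by
    rw [Matrix.add_mul, Matrix.mul_add, Matrix.mul_add]
    have a1 : V * Vᵀ * (V * Vᵀ) = V * Vᵀ := by
      rw [Matrix.mul_assoc, ← Matrix.mul_assoc Vᵀ V Vᵀ, hV, Matrix.one_mul]
    have a2 : V * Vᵀ * (W0ᵀ * W0) = 0 := by
      rw [Matrix.mul_assoc, ← Matrix.mul_assoc Vᵀ W0ᵀ W0, hVW0, Matrix.zero_mul,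
        Matrix.mul_zero]
    have a3 : W0ᵀ * W0 * (V * Vᵀ) = 0 := by
      rw [Matrix.mul_assoc, ← Matrix.mul_assoc W0 V Vᵀ, hWV, Matrix.zero_mul,
        Matrix.mul_zero]
    rw [a1, a2, a3, hproj, add_zero, zero_add]
  have hMcon := contraction_of_proj hMtM hRp hRs
  have key : finner M (L0 + H) ≤ nucNorm (L0 + H) := finner_le_nucNorm M (L0 + H) hMcon
  have hL0mem : L0 ∈ tangentT U V := by
    refine ⟨V * Matrix.diagonal d, 0, ?_⟩
    rw [hL0]
    simp [Matrix.transpose_mul, Matrix.diagonal_transpose, Matrix.mul_assoc]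
  have hWL0 : finner W0 L0 = 0 := hWmem L0 hL0mem
  have hUVL0 : finner (U * Vᵀ) L0 = ∑ i, d i := by
    rw [finner_eq_trace, hL0]
    have hx : (U * Vᵀ)ᵀ * (U * Matrix.diagonal d * Vᵀ) = V * Matrix.diagonal d * Vᵀ := by
      rw [Matrix.transpose_mul, Matrix.transpose_transpose]
      calc V * Uᵀ * (U * Matrix.diagonal d * Vᵀ)
          = V * ((Uᵀ * U) * (Matrix.diagonal d * Vᵀ)) := by simp only [Matrix.mul_assoc]
        _ = V * Matrix.diagonal d * Vᵀ := by
            rw [hU, Matrix.one_mul, Matrix.mul_assoc]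
    rw [hx, Matrix.trace_mul_cycle, hV, Matrix.one_mul, Matrix.trace_diagonal]
  have hnucL0 : nucNorm L0 = ∑ i, d i := by rw [hL0]; exact nucNorm_L0 U V d hU hV hd
  have hexp : finner M (L0 + H) =
      finner (U * Vᵀ) L0 + finner (U * Vᵀ) H + finner W0 L0 + finner W0 H := by
    rw [hM, finner_add_left, finner_add_right, finner_add_right]
    ring
  rw [ge_iff_le]
  linarith [key, hexp, e5, hWL0, hUVL0, hnucL0]
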